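/- Let δ = (δ1,δ2,δ3) ∈ {0,1}³, let ℓ ≥ 0 and m1, m2 be integers with |m1|,|m2| ≤ ℓ and m1 ≡ δ1+δ2 (mod 2), and define v(α,β,γ) := D^ℓ_{m1,m2}(α,β,γ) + (−1)^{δ1+δ3+ℓ} · D^ℓ_{−m1,m2}(α,β,γ). Then v satisfies both parity conditions: v(α,β,γ) = (−1)^{δ1+δ2} v(α+π,β,γ) and v(α,β,γ) = (−1)^{δ2+δ3} v(π−α,π−β,π+γ) for all α, γ ∈ ℝ and 0 < β < π. (Consequently v is the restriction to Euler angles of an element v_{ℓ,m1,m2} of the principal series V_{λ,δ} of SL(3,ℝ), for every admissible λ.) -/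

import Mathlib

open Real Complex

/-- factorial of an integer (junk value for negative inputs), as a real number -/
noncomputable def zfact (n : ℤ) : ℝ := (Nat.factorial n.toNat : ℝ)

/-- The Wigner little-d function `d^ℓ_{m1,m2}(x)`. -/
noncomputable def wd (ℓ m1 m2 : ℤ) (x : ℝ) : ℝ :=
  (-1 : ℝ) ^ (ℓ - m1) * (2 : ℝ) ^ (-ℓ) *
    Real.sqrt ((zfact (ℓ + m2) * (1 - x) ^ (m1 - m2)) /
      (zfact (ℓ - m2) * zfact (ℓ + m1) * zfact (ℓ - m1) * (1 + x) ^ (m1 + m2))) *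
    iteratedDeriv (ℓ - m2).toNat (fun y : ℝ => (1 - y) ^ (ℓ - m1) * (1 + y) ^ (ℓ + m1)) x

/-- The Wigner function of Euler angles `D^ℓ_{m1,m2}(α,β,γ)`, with the convention that it
vanishes for inadmissible indices. -/
noncomputable def wD (ℓ m1 m2 : ℤ) (α β γ : ℝ) : ℂ :=
  if 0 ≤ ℓ ∧ |m1| ≤ ℓ ∧ |m2| ≤ ℓ then
    Complex.exp (Complex.I * m1 * α) * (wd ℓ m1 m2 (Real.cos β) : ℂ) *
      Complex.exp (Complex.I * m2 * γ)
  else 0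

lemma neg_one_zpow_congr {K : Type*} [DivisionRing K] {a b : ℤ} (h : a % 2 = b % 2) :
    (-1 : K) ^ a = (-1 : K) ^ b := by
  obtain ⟨k, hk⟩ : ∃ k, a = b + 2 * k := ⟨(a - b) / 2, by omega⟩
  subst hk
  rw [zpow_add₀ (by norm_num : (-1 : K) ≠ 0), (even_two_mul k).neg_one_zpow, mul_one]

lemma exp_I_int_pi (m : ℤ) : Complex.exp (Complex.I * m * π) = (-1 : ℂ) ^ m := by
  rw [show Complex.I * m * π = m * (π * Complex.I) by ring, Complex.exp_int_mul,
    Complex.exp_pi_mul_I]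

lemma zfact_pos (n : ℤ) : 0 < zfact n := by
  unfold zfact; exact_mod_cast Nat.factorial_pos _

lemma wd_neg (ℓ m1 m2 : ℤ) (x : ℝ) (hx1 : -1 < x) (hx2 : x < 1) :
    wd ℓ m1 m2 (-x) = (-1 : ℝ) ^ (ℓ - m2).toNat * wd ℓ (-m1) m2 x := by
  have h1 : (0:ℝ) < 1 - x := by linarith
  have h2 : (0:ℝ) < 1 + x := by linarith
  unfold wd
  have hsq : zfact (ℓ + m2) * (1 - -x) ^ (m1 - m2) /
      (zfact (ℓ - m2) * zfact (ℓ + m1) * zfact (ℓ - m1) * (1 + -x) ^ (m1 + m2)) =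
      zfact (ℓ + m2) * (1 - x) ^ (-m1 - m2) /
      (zfact (ℓ - m2) * zfact (ℓ + -m1) * zfact (ℓ - -m1) * (1 + x) ^ (-m1 + m2)) := by
    rw [show (1 : ℝ) - -x = 1 + x by ring, show (1:ℝ) + -x = 1 - x by ring,
      show (-m1 - m2) = -(m1 + m2) by ring, show (-m1 + m2) = -(m1 - m2) by ring,
      zpow_neg, zpow_neg, show ℓ + -m1 = ℓ - m1 by ring, show ℓ - -m1 = ℓ + m1 by ring]
    rw [div_eq_div_iff
      (mul_pos (mul_pos (mul_pos (zfact_pos _) (zfact_pos _)) (zfact_pos _))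
        (zpow_pos h1 _)).ne' (mul_pos (mul_pos (mul_pos (zfact_pos _) (zfact_pos _)) (zfact_pos _))
        (inv_pos.mpr (zpow_pos h2 _))).ne']
    field_simp
  have hd : iteratedDeriv (ℓ - m2).toNat
      (fun y : ℝ => (1 - y) ^ (ℓ - m1) * (1 + y) ^ (ℓ + m1)) (-x)
      = (-1:ℝ) ^ (ℓ - m2).toNat * iteratedDeriv (ℓ - m2).toNat
        (fun y : ℝ => (1 - y) ^ (ℓ - -m1) * (1 + y) ^ (ℓ + -m1)) x := by
    have key := iteratedDeriv_comp_neg (ℓ - m2).toNat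
      (fun y : ℝ => (1 - y) ^ (ℓ - m1) * (1 + y) ^ (ℓ + m1)) x
    simp only [smul_eq_mul] at key
    have heq : (fun y : ℝ => (1 - -y) ^ (ℓ - m1) * (1 + -y) ^ (ℓ + m1))
        = fun y : ℝ => (1 - y) ^ (ℓ - -m1) * (1 + y) ^ (ℓ + -m1) := by
      funext y
      rw [show (1:ℝ) - -y = 1 + y by ring, show (1:ℝ) + -y = 1 - y by ring,
        show ℓ - -m1 = ℓ + m1 by ring, show ℓ + -m1 = ℓ - m1 by ring]
      ring
    rw [heq] at key
    have hpow : ((-1:ℝ) ^ (ℓ - m2).toNat) * ((-1:ℝ) ^ (ℓ - m2).toNat) = 1 := by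
      rw [← pow_add]
      exact Even.neg_one_pow ⟨(ℓ - m2).toNat, rfl⟩
    calc iteratedDeriv (ℓ - m2).toNat
          (fun y : ℝ => (1 - y) ^ (ℓ - m1) * (1 + y) ^ (ℓ + m1)) (-x)
        = ((-1:ℝ) ^ (ℓ - m2).toNat * (-1:ℝ) ^ (ℓ - m2).toNat) * iteratedDeriv (ℓ - m2).toNat
          (fun y : ℝ => (1 - y) ^ (ℓ - m1) * (1 + y) ^ (ℓ + m1)) (-x) := by
          rw [hpow, one_mul]
      _ = _ := by rw [mul_assoc, ← key]
  have hsign : (-1:ℝ) ^ (ℓ - m1) = (-1:ℝ) ^ (ℓ - -m1) :=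
    neg_one_zpow_congr (by omega)
  rw [hsq, hd, hsign]
  ring

lemma wD_add_pi (ℓ m1 m2 : ℤ) (α β γ : ℝ) :
    wD ℓ m1 m2 (α + π) β γ = (-1 : ℂ) ^ m1 * wD ℓ m1 m2 α β γ := by
  unfold wD
  split_ifs with h
  · push_cast
    rw [show Complex.I * m1 * ((α:ℂ) + (π:ℂ)) = Complex.I * m1 * α + Complex.I * m1 * π by push_cast; ring,
      Complex.exp_add, exp_I_int_pi]
    ring
  · ring

lemma wD_flip (ℓ m1 m2 : ℤ) (hℓ : 0 ≤ ℓ) (hm1 : |m1| ≤ ℓ) (hm2 : |m2| ≤ ℓ)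
    (α β γ : ℝ) (hβ : β ∈ Set.Ioo (0:ℝ) π) :
    wD ℓ m1 m2 (π - α) (π - β) (π + γ) = (-1 : ℂ) ^ (m1 + ℓ) * wD ℓ (-m1) m2 α β γ := by
  obtain ⟨hβ0, hβπ⟩ := hβ
  have hc1 : Real.cos β < 1 := by
    have := Real.strictAntiOn_cos (Set.mem_Icc.mpr ⟨le_refl 0, Real.pi_pos.le⟩)
      (Set.mem_Icc.mpr ⟨hβ0.le, hβπ.le⟩) hβ0
    simpa using this
  have hc2 : -1 < Real.cos β := by
    have := Real.strictAntiOn_cos (Set.mem_Icc.mpr ⟨hβ0.le, hβπ.le⟩)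
      (Set.mem_Icc.mpr ⟨Real.pi_pos.le, le_refl π⟩) hβπ
    simpa using this
  have hcond : 0 ≤ ℓ ∧ |m1| ≤ ℓ ∧ |m2| ≤ ℓ := ⟨hℓ, hm1, hm2⟩
  have hcond' : 0 ≤ ℓ ∧ |(-m1)| ≤ ℓ ∧ |m2| ≤ ℓ := ⟨hℓ, by rwa [abs_neg], hm2⟩
  rw [wD, wD, if_pos hcond, if_pos hcond', Real.cos_pi_sub,
    wd_neg ℓ m1 m2 (Real.cos β) hc2 hc1]
  push_cast
  rw [show Complex.I * m1 * ((π:ℂ) - (α:ℂ)) = Complex.I * m1 * π + Complex.I * (-m1 : ℤ) * α by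
      push_cast; ring,
    show Complex.I * m2 * ((π:ℂ) + (γ:ℂ)) = Complex.I * m2 * π + Complex.I * m2 * γ by
      push_cast; ring,
    Complex.exp_add, Complex.exp_add, exp_I_int_pi, exp_I_int_pi]
  push_cast
  have htn : (((ℓ - m2).toNat : ℤ)) = ℓ - m2 :=
    Int.toNat_of_nonneg (by have := abs_le.mp hm2; omega)
  have hpows : (-1 : ℂ) ^ m1 * (-1 : ℂ) ^ ((ℓ - m2).toNat) * (-1 : ℂ) ^ m2
      = (-1 : ℂ) ^ (m1 + ℓ) := by
    rw [← zpow_natCast (-1 : ℂ) (ℓ - m2).toNat, htn,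
      ← zpow_add₀ (by norm_num : (-1:ℂ) ≠ 0), ← zpow_add₀ (by norm_num : (-1:ℂ) ≠ 0)]
    congr 1
    omega
  linear_combination (Complex.exp (Complex.I * -(m1:ℂ) * (α:ℂ)) *
    ((wd ℓ (-m1) m2 (Real.cos β) : ℝ) : ℂ) * Complex.exp (Complex.I * (m2:ℂ) * (γ:ℂ))) * hpows

/-- The basis vectors `v_{ℓ,m1,m2} = D^ℓ_{m1,m2} + (−1)^{δ1+δ3+ℓ} D^ℓ_{−m1,m2}` satisfy
both parity conditions of Lemma 4.1, hence lie in the principal series `V_{λ,δ}`. -/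
theorem basis_vector_parity (δ1 δ2 δ3 : ℕ) (hδ1 : δ1 ≤ 1) (hδ2 : δ2 ≤ 1) (hδ3 : δ3 ≤ 1)
    (ℓ m1 m2 : ℤ) (hℓ : 0 ≤ ℓ) (hm1 : |m1| ≤ ℓ) (hm2 : |m2| ≤ ℓ)
    (hcong : m1 % 2 = ((δ1 : ℤ) + (δ2 : ℤ)) % 2) :
    ∀ α γ : ℝ, ∀ β ∈ Set.Ioo (0 : ℝ) π,
      (fun a b c : ℝ => wD ℓ m1 m2 a b c + (-1 : ℂ) ^ ((δ1 : ℤ) + (δ3 : ℤ) + ℓ) *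
          wD ℓ (-m1) m2 a b c) α β γ =
        (-1 : ℂ) ^ (δ1 + δ2) *
          (fun a b c : ℝ => wD ℓ m1 m2 a b c + (-1 : ℂ) ^ ((δ1 : ℤ) + (δ3 : ℤ) + ℓ) *
            wD ℓ (-m1) m2 a b c) (α + π) β γ ∧
      (fun a b c : ℝ => wD ℓ m1 m2 a b c + (-1 : ℂ) ^ ((δ1 : ℤ) + (δ3 : ℤ) + ℓ) *
          wD ℓ (-m1) m2 a b c) α β γ =
        (-1 : ℂ) ^ (δ2 + δ3) *
          (fun a b c : ℝ => wD ℓ m1 m2 a b c + (-1 : ℂ) ^ ((δ1 : ℤ) + (δ3 : ℤ) + ℓ) *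
            wD ℓ (-m1) m2 a b c) (π - α) (π - β) (π + γ) := by
  intro α γ β hβ
  have hm1' : |(-m1)| ≤ ℓ := by rwa [abs_neg]
  have hne : (-1 : ℂ) ≠ 0 := by norm_num
  have hnat1 : ((-1 : ℂ) ^ (δ1 + δ2) : ℂ) = (-1 : ℂ) ^ ((δ1 : ℤ) + (δ2 : ℤ)) := by
    rw [← zpow_natCast]; push_cast; ring_nf
  have hnat2 : ((-1 : ℂ) ^ (δ2 + δ3) : ℂ) = (-1 : ℂ) ^ ((δ2 : ℤ) + (δ3 : ℤ)) := by
    rw [← zpow_natCast]; push_cast; ring_nf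
  constructor
  · simp only []
    rw [wD_add_pi, wD_add_pi, hnat1]
    set A := wD ℓ m1 m2 α β γ
    set B := wD ℓ (-m1) m2 α β γ
    set c := (-1 : ℂ) ^ ((δ1 : ℤ) + (δ3 : ℤ) + ℓ)
    have h1 : (-1 : ℂ) ^ ((δ1 : ℤ) + (δ2 : ℤ)) * (-1 : ℂ) ^ m1 = 1 := by
      rw [← zpow_add₀ hne, neg_one_zpow_congr (a := (δ1 : ℤ) + δ2 + m1) (b := 0) (by omega),
        zpow_zero]
    have h2 : (-1 : ℂ) ^ ((δ1 : ℤ) + (δ2 : ℤ)) * (-1 : ℂ) ^ (-m1) = 1 := by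
      rw [← zpow_add₀ hne, neg_one_zpow_congr (a := (δ1 : ℤ) + δ2 + -m1) (b := 0) (by omega),
        zpow_zero]
    set P := (-1 : ℂ) ^ ((δ1 : ℤ) + (δ2 : ℤ))
    set Q := (-1 : ℂ) ^ m1
    set R := (-1 : ℂ) ^ (-m1)
    linear_combination (-A) * h1 + (-(c * B)) * h2
  · simp only []
    rw [wD_flip ℓ m1 m2 hℓ hm1 hm2 α β γ hβ, wD_flip ℓ (-m1) m2 hℓ hm1' hm2 α β γ hβ,
      neg_neg, hnat2]
    set A := wD ℓ m1 m2 α β γ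
    set B := wD ℓ (-m1) m2 α β γ
    have g1 : (-1 : ℂ) ^ ((δ2 : ℤ) + (δ3 : ℤ)) * (-1 : ℂ) ^ ((δ1 : ℤ) + (δ3 : ℤ) + ℓ) *
        (-1 : ℂ) ^ (-m1 + ℓ) = 1 := by
      rw [← zpow_add₀ hne, ← zpow_add₀ hne,
        neg_one_zpow_congr (a := (δ2:ℤ) + δ3 + ((δ1:ℤ) + δ3 + ℓ) + (-m1 + ℓ)) (b := 0) (by omega),
        zpow_zero]
    have g2 : (-1 : ℂ) ^ ((δ2 : ℤ) + (δ3 : ℤ)) * (-1 : ℂ) ^ (m1 + ℓ)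
        = (-1 : ℂ) ^ ((δ1 : ℤ) + (δ3 : ℤ) + ℓ) := by
      rw [← zpow_add₀ hne]
      exact neg_one_zpow_congr (by omega)
    set P2 := (-1 : ℂ) ^ ((δ2 : ℤ) + (δ3 : ℤ))
    set c := (-1 : ℂ) ^ ((δ1 : ℤ) + (δ3 : ℤ) + ℓ)
    set Q2 := (-1 : ℂ) ^ (m1 + ℓ)
    set R2 := (-1 : ℂ) ^ (-m1 + ℓ)
    linear_combination (-A) * g1 + (-B) * g2
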